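/- Let n be a positive integer, let i be an integer with 1 ≤ i ≤ ⌈n/2⌉, let c > 4 be a real number, and let t be an integer with max{n, n²/c} ≤ t ≤ n²/4 and t ≡ n − i (mod 2). Then Pr_i^t[MAX(w) = n and w(t) = n] ≥ e^{−1−c}/n², where e is Euler's number. -/

import Mathlib

/-- A 1D walk of length `t` started at `i`: a function on `{0,…,t}` starting at `i`
whose consecutive values differ by exactly `1`. -/
def IsWalk (i : ℤ) (t : ℕ) (w : Fin (t + 1) → ℤ) : Prop :=
  w 0 = i ∧ ∀ j : Fin t, |w j.succ - w j.castSucc| = 1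

/-- The number of walks of length `t` started at `i` satisfying `P`. -/
noncomputable def walkCount (i : ℤ) (t : ℕ) (P : (Fin (t + 1) → ℤ) → Prop) : ℕ :=
  {w : Fin (t + 1) → ℤ | IsWalk i t w ∧ P w}.ncard

/-- `Pr_i^t[P]`: the number of walks of length `t` started at `i` satisfying `P`,
divided by `2 ^ t`. -/
noncomputable def walkProb (i : ℤ) (t : ℕ) (P : (Fin (t + 1) → ℤ) → Prop) : ℝ :=
  (walkCount i t P : ℝ) / 2 ^ t

/-- `w(t) = n`. -/
def endsAt {t : ℕ} (n : ℤ) (w : Fin (t + 1) → ℤ) : Prop := w (Fin.last t) = n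

/-- `MAX(w) = n`. -/
def maxEq {t : ℕ} (n : ℤ) (w : Fin (t + 1) → ℤ) : Prop :=
  (∀ j, w j ≤ n) ∧ ∃ j, w j = n

/-- `MIN(w) ≥ m`. -/
def minGE {t : ℕ} (m : ℤ) (w : Fin (t + 1) → ℤ) : Prop := ∀ j, m ≤ w j

open Real
open scoped Nat

namespace WalkAux


/-- recursive count of walks from distance `d` below `n`, staying `≤ n`, ending at `n` -/
def G : ℕ → ℕ → ℕ
  | 0, d => if d = 0 then 1 else 0
  | (t+1), d => (if d = 0 then 0 else G t (d-1)) + G t (d+1)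

def W (n i : ℤ) (t : ℕ) : Set (Fin (t+1) → ℤ) :=
  {w | IsWalk i t w ∧ (∀ j, w j ≤ n) ∧ w (Fin.last t) = n}

lemma W_empty {n i : ℤ} {t : ℕ} (h : n < i) : W n i t = ∅ := by
  ext w
  simp only [W, Set.mem_setOf_eq, Set.mem_empty_iff_false, iff_false]
  rintro ⟨⟨h0, -⟩, hb, -⟩
  exact absurd (hb 0) (by omega)

lemma W_cons (n i : ℤ) (t : ℕ) (hi : i ≤ n) :
    W n i (t+1) = Fin.cons i '' (W n (i+1) t ∪ W n (i-1) t) := by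
  ext w
  constructor
  · rintro ⟨⟨h0, hs⟩, hb, he⟩
    refine ⟨Fin.tail w, ?_, ?_⟩
    · have h1 : |w 1 - i| = 1 := by
        have := hs 0
        simpa [h0] using this
      have hmem : ∀ x, w 1 = x → Fin.tail w ∈ W n x t := by
        intro x hx
        refine ⟨⟨hx ▸ rfl, fun m => ?_⟩, fun m => hb _, ?_⟩
        · have := hs m.succ
          rwa [← Fin.succ_castSucc] at this
        · rw [show Fin.last (t+1) = (Fin.last t).succ from rfl] at he
          exact he
      rcases abs_eq (by norm_num : (0:ℤ) ≤ 1) |>.mp h1 with h | h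
      · exact Set.mem_union_left _ (hmem _ (by omega))
      · exact Set.mem_union_right _ (hmem _ (by omega))
    · rw [← h0]; exact Fin.cons_self_tail w
  · rintro ⟨v, hv, rfl⟩
    have hv' : IsWalk (v 0) t v ∧ (∀ j, v j ≤ n) ∧ v (Fin.last t) = n ∧ |v 0 - i| = 1 := by
      rcases hv with h | h
      · exact ⟨⟨rfl, h.1.2⟩, h.2.1, h.2.2, by rw [h.1.1]; simp⟩
      · exact ⟨⟨rfl, h.1.2⟩, h.2.1, h.2.2, by rw [h.1.1]; simp⟩
    obtain ⟨⟨hv0, hvs⟩, hvb, hve, hstep⟩ := hv'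
    refine ⟨⟨Fin.cons_zero _ _, fun j => ?_⟩, fun j => ?_, ?_⟩
    · induction j using Fin.cases with
      | zero =>
        have : (0 : Fin (t+1)).succ = Fin.succ 0 := rfl
        simp only [Fin.castSucc_zero, Fin.cons_zero, Fin.succ_zero_eq_one]
        rw [show (1 : Fin (t+2)) = Fin.succ 0 from rfl, Fin.cons_succ]
        simpa [hv0] using hstep
      | succ m =>
        rw [← Fin.succ_castSucc, Fin.cons_succ, Fin.cons_succ]
        exact hvs m
    · induction j using Fin.cases with
      | zero => simpa using hi
      | succ m => rw [Fin.cons_succ]; exact hvb m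
    · rw [show Fin.last (t+1) = (Fin.last t).succ from rfl, Fin.cons_succ]
      exact hve

lemma W_card : ∀ (t : ℕ) (n i : ℤ), i ≤ n →
    (W n i t).Finite ∧ (W n i t).ncard = G t (n - i).toNat := by
  intro t
  induction t with
  | zero =>
    intro n i hi
    by_cases h : i = n
    · subst h
      have hset : W i i 0 = {fun _ => i} := by
        ext w
        simp only [W, Set.mem_setOf_eq, Set.mem_singleton_iff]
        constructor
        · rintro ⟨⟨h0, -⟩, -, -⟩
          funext j
          have hj : j = 0 := Fin.ext (Nat.lt_one_iff.mp j.isLt)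
          rw [hj, h0]
        · rintro rfl
          exact ⟨⟨rfl, fun j => j.elim0⟩, fun _ => le_refl _, rfl⟩
      rw [hset]
      simp [G]
    · have hset : W n i 0 = ∅ := by
        ext w
        simp only [W, Set.mem_setOf_eq, Set.mem_empty_iff_false, iff_false]
        rintro ⟨⟨h0, -⟩, -, he⟩
        exact h (by rw [← h0, ← he]; rfl)
      rw [hset]
      simp only [Set.finite_empty, Set.ncard_empty, true_and, G]
      rw [if_neg (by omega)]
  | succ t ih =>
    intro n i hi
    have hdown := ih n (i-1) (by omega)
    have hup : (W n (i+1) t).Finite ∧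
        (W n (i+1) t).ncard = if (n-i).toNat = 0 then 0 else G t ((n-i).toNat - 1) := by
      by_cases h : i + 1 ≤ n
      · have := ih n (i+1) h
        rw [if_neg (by omega)]
        convert this using 3
        omega
      · rw [W_empty (by omega), if_pos (by omega)]
        simp
    have hdisj : Disjoint (W n (i+1) t) (W n (i-1) t) := by
      rw [Set.disjoint_left]
      rintro v ⟨⟨h0, -⟩, -⟩ ⟨⟨h0', -⟩, -⟩
      omega
    have hunion_fin : (W n (i+1) t ∪ W n (i-1) t).Finite := hup.1.union hdown.1
    constructor
    · rw [W_cons n i t hi]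
      exact hunion_fin.image _
    · rw [W_cons n i t hi, Set.ncard_image_of_injective _
        (Fin.cons_right_injective (α := fun _ : Fin (t+1+1) => ℤ) i),
        Set.ncard_union_eq hdisj hup.1 hdown.1, hup.2, hdown.2]
      have h1 : (n - (i-1)).toNat = (n - i).toNat + 1 := by omega
      rw [h1]
      try
        show _ = G (t+1) (n-i).toNat
        rw [G]

lemma G_odd : ∀ (t d : ℕ), t % 2 ≠ d % 2 → G t d = 0 := by
  intro t
  induction t with
  | zero => intro d h; rw [G, if_neg (by omega)]
  | succ t ih =>
    intro d h
    rw [G]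
    rcases Nat.eq_zero_or_pos d with rfl | hd
    · rw [if_pos rfl, ih 1 (by omega)]
    · rw [if_neg (by omega), ih (d-1) (by omega), ih (d+1) (by omega)]

lemma G_closed : ∀ (t d : ℕ), t % 2 = d % 2 →
    (G t d : ℤ) = t.choose ((t+d)/2) - t.choose ((t+d)/2 + 1) := by
  intro t
  induction t with
  | zero =>
    intro d h
    rcases Nat.eq_zero_or_pos d with rfl | hd
    · simp [G]
    · rw [G, if_neg (by omega)]
      have h2 : 1 ≤ d/2 := by omega
      rw [Nat.choose_eq_zero_of_lt (by omega), Nat.choose_eq_zero_of_lt (by omega)]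
      simp
  | succ t ih =>
    intro d h
    set K := (t + 1 + d)/2 with hK
    have hKK : 2 * K = t + 1 + d := by omega
    rw [G]
    have hK1 : 1 ≤ K := by omega
    have hp1 : (t+1).choose K = t.choose (K-1) + t.choose K := by
      obtain ⟨m, hm⟩ : ∃ m, K = m + 1 := ⟨K-1, by omega⟩
      rw [hm]
      simpa using Nat.choose_succ_succ t m
    have hp2 : (t+1).choose (K+1) = t.choose K + t.choose (K+1) :=
      Nat.choose_succ_succ t K
    rcases Nat.eq_zero_or_pos d with rfl | hd
    · rw [if_pos rfl]
      have hih := ih 1 (by omega)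
      have h1 : (t + 1)/2 = K := by omega
      rw [h1] at hih
      have hsymm : t.choose (K-1) = t.choose K := by
        have hX : K - 1 = t - K := by omega
        rw [hX, Nat.choose_symm (by omega)]
      norm_num
      omega
    · rw [if_neg (by omega)]
      have hih1 := ih (d-1) (by omega)
      have hih2 := ih (d+1) (by omega)
      have h1 : (t + (d-1))/2 = K - 1 := by omega
      have h2 : (t + (d+1))/2 = K := by omega
      have h3 : K - 1 + 1 = K := by omega
      rw [h1, h3] at hih1
      rw [h2] at hih2
      push_cast
      omega



lemma sqrt_pi_le_stirlingSeq (m : ℕ) (hm : 1 ≤ m) : Real.sqrt π ≤ Stirling.stirlingSeq m := by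
  obtain ⟨m', rfl⟩ : ∃ m', m = m' + 1 := ⟨m - 1, by omega⟩
  have htend : Filter.Tendsto (Stirling.stirlingSeq ∘ Nat.succ) Filter.atTop
      (nhds (Real.sqrt π)) :=
    Stirling.tendsto_stirlingSeq_sqrt_pi.comp (Filter.tendsto_add_atTop_nat 1)
  exact Stirling.stirlingSeq'_antitone.le_of_tendsto htend m'

lemma stirlingSeq_le (m : ℕ) (hm : 1 ≤ m) : Stirling.stirlingSeq m ≤ exp 1 / Real.sqrt 2 := by
  obtain ⟨m', rfl⟩ : ∃ m', m = m' + 1 := ⟨m - 1, by omega⟩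
  have := Stirling.stirlingSeq'_antitone (Nat.zero_le m')
  simpa [Stirling.stirlingSeq_one] using this

lemma factorial_lower (m : ℕ) (hm : 1 ≤ m) :
    Real.sqrt π * (Real.sqrt (2*m) * ((m : ℝ) / exp 1) ^ m) ≤ (m ! : ℝ) := by
  have h := sqrt_pi_le_stirlingSeq m hm
  rw [Stirling.stirlingSeq] at h
  have hpos : 0 < Real.sqrt (2*m) * ((m : ℝ) / exp 1) ^ m := by positivity
  exact (le_div_iff₀ hpos).mp h

lemma factorial_upper (m : ℕ) (hm : 1 ≤ m) :
    (m ! : ℝ) ≤ exp 1 * Real.sqrt m * ((m : ℝ) / exp 1) ^ m := by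
  have h := stirlingSeq_le m hm
  rw [Stirling.stirlingSeq, div_le_div_iff₀ (by positivity) (by positivity)] at h
  have hs : Real.sqrt (2*(m:ℝ)) = Real.sqrt 2 * Real.sqrt m := by
    rw [← Real.sqrt_mul (by norm_num)]
  rw [hs] at h
  have h2 : (0:ℝ) < Real.sqrt 2 := by positivity
  nlinarith [h, h2]
  
lemma choose_lower (k j : ℕ) (hk : 1 ≤ k) (hj : 1 ≤ j) :
    Real.sqrt π * Real.sqrt (2*(k+j)) / (exp 1 ^ 2 * (Real.sqrt k * Real.sqrt j))
      * (((k:ℝ)+j) ^ (k+j) / ((k:ℝ) ^ k * (j:ℝ) ^ j)) ≤ ((k+j).choose k : ℝ) := by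
  have hfact : ((k+j).choose k : ℝ) * (k ! : ℝ) * (j ! : ℝ) = ((k+j)! : ℝ) := by
    have := Nat.add_choose_mul_factorial_mul_factorial j k
    rw [Nat.add_comm j k] at this
    exact_mod_cast congrArg (Nat.cast : ℕ → ℝ) (by linarith [this] : (k+j).choose k * k ! * j ! = (k+j)!)
  have hkj : 1 ≤ k + j := by omega
  have hlow := factorial_lower (k+j) hkj
  have hupk := factorial_upper k hk
  have hupj := factorial_upper j hj
  have hkpos : (0:ℝ) < k := by exact_mod_cast hk
  have hjpos : (0:ℝ) < j := by exact_mod_cast hj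
  have he : (0:ℝ) < exp 1 := Real.exp_pos 1
  -- the e-powers cancel:
  have hcancel : (((k:ℝ)+j) / exp 1) ^ (k+j) =
      ((k:ℝ)+j) ^ (k+j) / exp 1 ^ (k+j) := div_pow _ _ _
  have hck : ((k:ℝ) / exp 1) ^ k = (k:ℝ) ^ k / exp 1 ^ k := div_pow _ _ _
  have hcj : ((j:ℝ) / exp 1) ^ j = (j:ℝ) ^ j / exp 1 ^ j := div_pow _ _ _
  have hkfac_pos : (0:ℝ) < (k ! : ℝ) := by exact_mod_cast Nat.factorial_pos k
  have hjfac_pos : (0:ℝ) < (j ! : ℝ) := by exact_mod_cast Nat.factorial_pos j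
  rw [div_mul_eq_mul_div, div_le_iff₀ (by positivity)]
  have key : Real.sqrt π * Real.sqrt (2*(k+j)) * (((k:ℝ)+j) ^ (k+j) / ((k:ℝ) ^ k * (j:ℝ) ^ j))
      ≤ ((k+j).choose k : ℝ) * (exp 1 ^ 2 * (Real.sqrt k * Real.sqrt j)) := by
    have h1 : Real.sqrt π * (Real.sqrt (2*(k+j)) * (((k:ℝ)+j) / exp 1) ^ (k+j))
        ≤ ((k+j).choose k : ℝ) * (k ! : ℝ) * (j ! : ℝ) := by
      rw [hfact]
      have : ((k:ℝ)+j) = ((k+j : ℕ) : ℝ) := by push_cast; ring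
      rw [this]
      exact hlow
    have h2 : ((k+j).choose k : ℝ) * (k ! : ℝ) * (j ! : ℝ) ≤
        ((k+j).choose k : ℝ) * (exp 1 * Real.sqrt k * ((k:ℝ) / exp 1) ^ k)
          * (exp 1 * Real.sqrt j * ((j:ℝ) / exp 1) ^ j) := by
      have hc : (0:ℝ) ≤ ((k+j).choose k : ℝ) := by positivity
      nlinarith [mul_le_mul hupk hupj (le_of_lt hjfac_pos) (by positivity)]
    have hY : (0:ℝ) < ((k:ℝ)/exp 1)^k * ((j:ℝ)/exp 1)^j := by positivity
    rw [← mul_le_mul_iff_of_pos_right hY]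
    have hprod : ((k:ℝ)+j)^(k+j) / ((k:ℝ)^k * (j:ℝ)^j) * (((k:ℝ)/exp 1)^k * ((j:ℝ)/exp 1)^j)
        = (((k:ℝ)+j)/exp 1)^(k+j) := by
      rw [div_pow, div_pow, div_pow, pow_add]
      field_simp
      exact pow_add _ _ _
    calc Real.sqrt π * Real.sqrt (2*(k+j)) * (((k:ℝ)+j) ^ (k+j) / ((k:ℝ) ^ k * (j:ℝ) ^ j))
          * (((k:ℝ)/exp 1)^k * ((j:ℝ)/exp 1)^j)
        = Real.sqrt π * (Real.sqrt (2*(k+j)) * (((k:ℝ)+j) / exp 1) ^ (k+j)) := by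
          rw [← hprod]
          ring
      _ ≤ ((k+j).choose k : ℝ) * (k ! : ℝ) * (j ! : ℝ) := h1
      _ ≤ ((k+j).choose k : ℝ) * (exp 1 * Real.sqrt k * ((k:ℝ) / exp 1) ^ k)
            * (exp 1 * Real.sqrt j * ((j:ℝ) / exp 1) ^ j) := h2
      _ = ((k+j).choose k : ℝ) * (exp 1 ^ 2 * (Real.sqrt k * Real.sqrt j))
            * (((k:ℝ)/exp 1)^k * ((j:ℝ)/exp 1)^j) := by ring
  linarith [key]



lemma real_entropy (K J D T : ℝ) (hK : 0 < K) (hJ : 0 < J) (hT : T = K + J)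
    (hD : D = K - J) :
    T * Real.log 2 - D^2/T ≤ T * Real.log T - K * Real.log K - J * Real.log J := by
  subst hT; subst hD
  have hT0 : 0 < K + J := by linarith
  have l1 : Real.log (2*K/(K+J)) ≤ 2*K/(K+J) - 1 := Real.log_le_sub_one_of_pos (by positivity)
  have l2 : Real.log (2*J/(K+J)) ≤ 2*J/(K+J) - 1 := Real.log_le_sub_one_of_pos (by positivity)
  have e1 : Real.log (2*K/(K+J)) = Real.log 2 + Real.log K - Real.log (K+J) := by
    rw [Real.log_div (by positivity) (by positivity), Real.log_mul (by norm_num) (ne_of_gt hK)]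
  have e2 : Real.log (2*J/(K+J)) = Real.log 2 + Real.log J - Real.log (K+J) := by
    rw [Real.log_div (by positivity) (by positivity), Real.log_mul (by norm_num) (ne_of_gt hJ)]
  rw [e1] at l1
  rw [e2] at l2
  have m1 : K * (Real.log 2 + Real.log K - Real.log (K+J)) ≤ K * (2*K/(K+J) - 1) :=
    mul_le_mul_of_nonneg_left l1 hK.le
  have m2 : J * (Real.log 2 + Real.log J - Real.log (K+J)) ≤ J * (2*J/(K+J) - 1) :=
    mul_le_mul_of_nonneg_left l2 hJ.le
  have hsum : K * (2*K/(K+J) - 1) + J * (2*J/(K+J) - 1) = (K-J)^2/(K+J) := by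
    field_simp
    ring
  nlinarith [m1, m2, hsum]

lemma pow_entropy (k j d : ℕ) (hk : 0 < k) (hj : 0 < j) (hd : k = j + d) :
    (2:ℝ)^(k+j) * Real.exp (-(d:ℝ)^2/((k:ℝ)+j)) ≤ ((k:ℝ)+j)^(k+j) / ((k:ℝ)^k * (j:ℝ)^j) := by
  have hkR : (0:ℝ) < k := by exact_mod_cast hk
  have hjR : (0:ℝ) < j := by exact_mod_cast hj
  have hdR : (d:ℝ) = (k:ℝ) - j := by
    have : (k:ℝ) = (j:ℝ) + d := by exact_mod_cast hd
    linarith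
  have key := real_entropy (k:ℝ) (j:ℝ) (d:ℝ) ((k:ℝ)+j) hkR hjR rfl hdR
  have hT0 : (0:ℝ) < (k:ℝ)+j := by linarith
  have lhs_eq : (2:ℝ)^(k+j) * Real.exp (-(d:ℝ)^2/((k:ℝ)+j))
      = Real.exp (((k:ℝ)+j) * Real.log 2 - (d:ℝ)^2/((k:ℝ)+j)) := by
    rw [Real.exp_sub]
    congr 1
    · rw [show ((k:ℝ)+j) = ((k+j : ℕ) : ℝ) by push_cast; ring, Real.exp_nat_mul,
        Real.exp_log (by norm_num)]
    · rw [← Real.exp_neg, neg_div]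
  have rhs_eq : ((k:ℝ)+j)^(k+j) / ((k:ℝ)^k * (j:ℝ)^j)
      = Real.exp (((k:ℝ)+j) * Real.log ((k:ℝ)+j) - (k:ℝ) * Real.log k - (j:ℝ) * Real.log j) := by
    rw [Real.exp_sub, Real.exp_sub]
    rw [show ((k:ℝ)+j) * Real.log ((k:ℝ)+j) = ((k+j:ℕ):ℝ) * Real.log ((k:ℝ)+j) by push_cast; ring]
    rw [Real.exp_nat_mul, Real.exp_log hT0, Real.exp_nat_mul, Real.exp_log hkR,
      Real.exp_nat_mul, Real.exp_log hjR]
    push_cast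
    field_simp
  rw [lhs_eq, rhs_eq]
  exact Real.exp_le_exp.mpr key


end WalkAux

set_option maxHeartbeats 1000000 in
/-- For a positive integer `n`, an integer `1 ≤ i ≤ ⌈n/2⌉`, a real
`c > 4`, and an integer `t` with `max {n, n²/c} ≤ t ≤ n²/4` and `t ≡ n - i (mod 2)`,
`Pr_i^t[MAX(w) = n, w(t) = n] ≥ e^{-1-c} / n²`. -/
theorem walkProb_max_end_lower (n i t : ℕ) (c : ℝ) (hn : 0 < n)
    (hi1 : 1 ≤ i) (hi2 : i ≤ (n + 1) / 2) (hc : 4 < c)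
    (ht1 : max ((n : ℝ)) ((n : ℝ) ^ 2 / c) ≤ (t : ℝ)) (ht2 : (t : ℝ) ≤ (n : ℝ) ^ 2 / 4)
    (hpar : (t : ℤ) % 2 = ((n : ℤ) - (i : ℤ)) % 2) :
    walkProb (i : ℤ) t (fun w => maxEq (n : ℤ) w ∧ endsAt (n : ℤ) w) ≥
      Real.exp (-1 - c) / (n : ℝ) ^ 2 := by
  have hnR : (0:ℝ) < n := by exact_mod_cast hn
  have htnR : (n:ℝ) ≤ t := le_trans (le_max_left _ _) ht1
  have hn4R : (4:ℝ) ≤ n := by nlinarith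
  have hn4 : 4 ≤ n := by exact_mod_cast hn4R
  have htn : n ≤ t := by exact_mod_cast htnR
  have h4t : 4*t ≤ n^2 := by
    have : (4 * t : ℝ) ≤ (n:ℝ)^2 := by linarith
    exact_mod_cast this
  have hin : i < n := by omega
  set d : ℕ := n - i with hd
  have hd1 : 1 ≤ d := by omega
  have hdn : d + 1 ≤ n := by omega
  have h2d : n ≤ 2*d + 1 := by omega
  have hpar2 : t % 2 = d % 2 := by omega
  have htd : d + 2 ≤ t := by omega
  set k : ℕ := (t + d)/2 with hk
  have hk2 : 2*k = t + d := by omega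
  set j : ℕ := t - k with hj
  have hkj : k + j = t := by omega
  have hjd : k = j + d := by omega
  have hj1 : 1 ≤ j := by omega
  have hk1 : 1 ≤ k := by omega
  -- Counting
  have hWset : {w : Fin (t+1) → ℤ | IsWalk (i:ℤ) t w ∧ (maxEq (n:ℤ) w ∧ endsAt (n:ℤ) w)}
      = WalkAux.W (n:ℤ) (i:ℤ) t := by
    ext w
    simp only [Set.mem_setOf_eq, WalkAux.W, maxEq, endsAt]
    constructor
    · rintro ⟨hw, ⟨hb, -⟩, he⟩
      exact ⟨hw, hb, he⟩
    · rintro ⟨hw, hb, he⟩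
      exact ⟨hw, ⟨hb, ⟨Fin.last t, he⟩⟩, he⟩
  have hin' : (i:ℤ) ≤ (n:ℤ) := by exact_mod_cast hin.le
  have hcount : walkCount (i:ℤ) t (fun w => maxEq (n:ℤ) w ∧ endsAt (n:ℤ) w)
      = WalkAux.G t d := by
    rw [walkCount, hWset, (WalkAux.W_card t (n:ℤ) (i:ℤ) hin').2]
    congr 1
    omega
  have hclosed := WalkAux.G_closed t d hpar2
  rw [show (t + d)/2 = k from rfl] at hclosed
  have hcountZ : ((walkCount (i:ℤ) t (fun w => maxEq (n:ℤ) w ∧ endsAt (n:ℤ) w)) : ℤ)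
      = (t.choose k : ℤ) - (t.choose (k+1) : ℤ) := by rw [hcount]; exact hclosed
  have hcountR : ((walkCount (i:ℤ) t (fun w => maxEq (n:ℤ) w ∧ endsAt (n:ℤ) w)) : ℝ)
      = (t.choose k : ℝ) - (t.choose (k+1) : ℝ) := by exact_mod_cast hcountZ
  -- choose ratio
  have hsucc : (t.choose (k+1) : ℝ) * ((k:ℝ)+1) = (t.choose k : ℝ) * ((t:ℝ) - k) := by
    have h := Nat.choose_succ_right_eq t k
    have hks : k ≤ t := by omega
    have : ((t.choose (k+1) * (k+1) : ℕ) : ℝ) = ((t.choose k * (t - k) : ℕ) : ℝ) := by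
      exact_mod_cast congrArg (Nat.cast : ℕ → ℝ) h
    push_cast [Nat.cast_sub hks] at this
    convert this using 2 <;> push_cast <;> ring
  have hk1R : (0:ℝ) < (k:ℝ)+1 := by positivity
  have hdiff : (t.choose k : ℝ) - (t.choose (k+1) : ℝ)
      = (t.choose k : ℝ) * ((d:ℝ)+1) / ((k:ℝ)+1) := by
    have h2kR : 2*(k:ℝ) = (t:ℝ) + d := by exact_mod_cast hk2
    have : (t.choose (k+1) : ℝ) = (t.choose k : ℝ) * ((t:ℝ) - k) / ((k:ℝ)+1) := by
      field_simp
      linarith [hsucc]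
    rw [this]
    field_simp
    linear_combination (t.choose k : ℝ) * h2kR
  -- lower bound on choose
  have hcl := WalkAux.choose_lower k j hk1 hj1
  rw [hkj] at hcl
  have hTR : (k:ℝ) + j = (t:ℝ) := by exact_mod_cast hkj
  have hent := WalkAux.pow_entropy k j d hk1 hj1 hjd
  rw [hkj, hTR] at hent
  rw [hTR] at hcl
  -- hcl : √π * √(2*t) / (e^2 * (√k*√j)) * ((t:ℝ)^t/(k^k*j^j)) ≤ choose
  -- hent : 2^t * exp(-d^2/t) ≤ (t:ℝ)^t/(k^k*j^j)
  have htR : (0:ℝ) < t := by linarith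
  have hsqkj : Real.sqrt k * Real.sqrt j ≤ (t:ℝ)/2 := by
    rw [← Real.sqrt_mul (Nat.cast_nonneg k)]
    have hle : (k:ℝ) * j ≤ ((t:ℝ)/2)^2 := by nlinarith [hTR, sq_nonneg ((k:ℝ) - (j:ℝ))]
    calc Real.sqrt ((k:ℝ)*j) ≤ Real.sqrt (((t:ℝ)/2)^2) := Real.sqrt_le_sqrt hle
      _ = (t:ℝ)/2 := Real.sqrt_sq (by positivity)
  have hsq2t : 2 * Real.sqrt t ≤ Real.sqrt π * Real.sqrt (2*(t:ℝ)) := by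
    rw [← Real.sqrt_mul Real.pi_nonneg]
    have h4 : (4:ℝ) * t ≤ π * (2*t) := by nlinarith [Real.pi_gt_three]
    calc 2 * Real.sqrt t = Real.sqrt (4*t) := by
          rw [show (4:ℝ)*t = 2^2 * t by ring, Real.sqrt_mul (by positivity),
            Real.sqrt_sq (by norm_num)]
      _ ≤ Real.sqrt (π * (2*t)) := Real.sqrt_le_sqrt h4
  have hA : 2 * Real.sqrt t / (Real.exp 1 ^ 2 * ((t:ℝ)/2))
      ≤ Real.sqrt π * Real.sqrt (2*(t:ℝ)) / (Real.exp 1 ^ 2 * (Real.sqrt k * Real.sqrt j)) := by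
    have hkj0 : (0:ℝ) < Real.sqrt k * Real.sqrt j := by
      have : (0:ℝ) < (k:ℝ) := by exact_mod_cast hk1
      have : (0:ℝ) < (j:ℝ) := by exact_mod_cast hj1
      positivity
    gcongr
  have hB0 : (0:ℝ) < 2^t * Real.exp (-(d:ℝ)^2/t) := by positivity
  have hA0 : (0:ℝ) < 2 * Real.sqrt t / (Real.exp 1 ^ 2 * ((t:ℝ)/2)) := by positivity
  have hC : 2 * Real.sqrt t / (Real.exp 1 ^ 2 * ((t:ℝ)/2)) * (2^t * Real.exp (-(d:ℝ)^2/t))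
      ≤ (t.choose k : ℝ) := by
    calc 2 * Real.sqrt t / (Real.exp 1 ^ 2 * ((t:ℝ)/2)) * (2^t * Real.exp (-(d:ℝ)^2/t))
        ≤ Real.sqrt π * Real.sqrt (2*(t:ℝ)) / (Real.exp 1 ^ 2 * (Real.sqrt k * Real.sqrt j))
            * ((t:ℝ)^t/((k:ℝ)^k*(j:ℝ)^j)) := by
          apply mul_le_mul hA hent hB0.le
          positivity
      _ ≤ (t.choose k : ℝ) := hcl
  -- final assembly
  have hprob : walkProb (i:ℤ) t (fun w => maxEq (n:ℤ) w ∧ endsAt (n:ℤ) w)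
      = (t.choose k : ℝ) * ((d:ℝ)+1) / ((k:ℝ)+1) / 2^t := by
    rw [walkProb, hcountR, hdiff]
  rw [hprob, ge_iff_le]
  have hexp : Real.exp (-c) ≤ Real.exp (-(d:ℝ)^2/t) := by
    apply Real.exp_le_exp.mpr
    have hdn' : (d:ℝ) ≤ (n:ℝ) := by
      have : d ≤ n := by omega
      exact_mod_cast this
    have hd2 : (d:ℝ)^2 ≤ (n:ℝ)^2 := by nlinarith [Nat.cast_nonneg (α := ℝ) d]
    have hn2c : (n:ℝ)^2 ≤ c * t := by
      have hmax := le_trans (le_max_right _ _) ht1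
      have hc0 : (0:ℝ) < c := by linarith
      rw [div_le_iff₀ hc0] at hmax
      linarith
    have hdt : (d:ℝ)^2/t ≤ c := by
      rw [div_le_iff₀ htR]
      linarith
    rw [neg_div]
    linarith
  have he3 : Real.exp 1 ≤ 3 := by
    have := Real.exp_one_lt_d9
    linarith
  have he0 : (0:ℝ) < Real.exp 1 := Real.exp_pos 1
  have hsqt_sq : Real.sqrt t * Real.sqrt t = (t:ℝ) := Real.mul_self_sqrt htR.le
  have hsq0 : (0:ℝ) < Real.sqrt t := Real.sqrt_pos.mpr htR
  have hsqt : Real.sqrt t ≤ (n:ℝ)/2 := by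
    rw [show (n:ℝ)/2 = Real.sqrt (((n:ℝ)/2)^2) from (Real.sqrt_sq (by positivity)).symm]
    apply Real.sqrt_le_sqrt
    have hq : ((n:ℝ)/2)^2 = (n:ℝ)^2/4 := by ring
    linarith
  have hkt : (k:ℝ) + 1 ≤ 5*(n:ℝ)^2/16 := by
    have hkt' : (k:ℝ) ≤ (t:ℝ) := by
      have : k ≤ t := by omega
      exact_mod_cast this
    have h16 : (16:ℝ) ≤ (n:ℝ)^2 := by nlinarith [hn4R]
    linarith [hkt', h16, ht2]
  have hdn2 : (n:ℝ) ≤ 2*((d:ℝ)+1) := by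
    have : n ≤ 2*(d+1) := by omega
    exact_mod_cast this
  -- numeric core : e * t * (k+1) ≤ 4 * √t * (d+1) * n²
  have s1 : Real.exp 1 * ((t:ℝ) * ((k:ℝ)+1)) ≤ 3 * ((Real.sqrt t * ((n:ℝ)/2)) * (5*(n:ℝ)^2/16)) := by
    have t_le : (t:ℝ) ≤ Real.sqrt t * ((n:ℝ)/2) :=
      hsqt_sq.symm.trans_le (mul_le_mul_of_nonneg_left hsqt hsq0.le)
    have h1 : (t:ℝ) * ((k:ℝ)+1) ≤ (Real.sqrt t * ((n:ℝ)/2)) * (5*(n:ℝ)^2/16) := by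
      apply mul_le_mul t_le hkt (by positivity) (by positivity)
    apply mul_le_mul he3 h1 (by positivity) (by norm_num)
  have s2 : 3 * ((Real.sqrt t * ((n:ℝ)/2)) * (5*(n:ℝ)^2/16)) ≤ 4*Real.sqrt t*((d:ℝ)+1)*(n:ℝ)^2 := by
    nlinarith [mul_le_mul_of_nonneg_left hdn2
      (mul_nonneg (mul_nonneg (by norm_num : (0:ℝ) ≤ 2) hsq0.le) (sq_nonneg (n:ℝ))),
      mul_nonneg hsq0.le (by positivity : (0:ℝ) ≤ (n:ℝ)^3)]
  have core : Real.exp (-1) / (n:ℝ)^2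
      ≤ 4*Real.sqrt t*((d:ℝ)+1) / (Real.exp 1 ^ 2 * (t:ℝ) * ((k:ℝ)+1)) := by
    rw [div_le_div_iff₀ (by positivity) (by positivity)]
    have hE2 : Real.exp (-1) * (Real.exp 1 ^ 2 * (t:ℝ) * ((k:ℝ)+1))
        = Real.exp 1 * ((t:ℝ) * ((k:ℝ)+1)) := by
      have hE : Real.exp (-1) * Real.exp 1 ^ 2 = Real.exp 1 := by
        rw [sq, ← mul_assoc, ← Real.exp_add]
        norm_num
      linear_combination ((t:ℝ) * ((k:ℝ)+1)) * hE
    rw [hE2]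
    linarith
  -- assemble
  have haC : 2 * Real.sqrt t / (Real.exp 1 ^ 2 * ((t:ℝ)/2)) * (2^t * Real.exp (-c))
      ≤ (t.choose k : ℝ) := by
    refine le_trans ?_ hC
    gcongr
  have h2t : (0:ℝ) < 2^t := by positivity
  calc Real.exp (-1-c) / (n:ℝ)^2
      = Real.exp (-c) * (Real.exp (-1) / (n:ℝ)^2) := by
        rw [show (-1-c:ℝ) = -c + -1 by ring, Real.exp_add]
        ring
    _ ≤ Real.exp (-c) * (4*Real.sqrt t*((d:ℝ)+1) / (Real.exp 1 ^ 2 * (t:ℝ) * ((k:ℝ)+1))) := by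
        apply mul_le_mul_of_nonneg_left core (Real.exp_pos _).le
    _ = 2 * Real.sqrt t / (Real.exp 1 ^ 2 * ((t:ℝ)/2)) * (2^t * Real.exp (-c))
          * ((d:ℝ)+1) / ((k:ℝ)+1) / 2^t := by
        field_simp
        ring
    _ ≤ (t.choose k : ℝ) * ((d:ℝ)+1) / ((k:ℝ)+1) / 2^t := by
        gcongr
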